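/- Let r, s > 0, let N ≥ 1, and let β_N = (ξ_1, …, ξ_{N²}) be an orthonormal basis of u_N. Then the family of 2N² matrices consisting of √r·ξ_i (1 ≤ i ≤ N²) together with √s·(i ξ_i) (1 ≤ i ≤ N²) is an orthonormal basis of gl_N = M_N(ℂ), viewed as a real vector space, with respect to the real inner product ⟨A,B⟩_{r,s} = ½(1/s + 1/r)·N·Re Tr(A B*) + ½(1/s − 1/r)·N·Re Tr(A B); that is, this family is orthonormal for ⟨·,·⟩_{r,s} and spans M_N(ℂ) over ℝ. -/

import Mathlib

open Matrix

noncomputable def innerRS (r s : ℝ) (N : ℕ) (A B : Matrix (Fin N) (Fin N) ℂ) : ℝ :=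
  (1 / 2) * (1 / s + 1 / r) * N * ((A * Bᴴ).trace).re
    + (1 / 2) * (1 / s - 1 / r) * N * ((A * B).trace).re

theorem orthonormal_basis_glN (r s : ℝ) (hr : 0 < r) (hs : 0 < s) (N : ℕ) (hN : 1 ≤ N)
    (ξ : Fin (N ^ 2) → Matrix (Fin N) (Fin N) ℂ)
    (hskew : ∀ i, (ξ i)ᴴ = -ξ i)
    (horth : ∀ i j, -(N : ℂ) * (ξ i * ξ j).trace = if i = j then 1 else 0)
    (hspan : ∀ A : Matrix (Fin N) (Fin N) ℂ, Aᴴ = -A →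
      A ∈ Submodule.span ℝ (Set.range ξ))
    (η : Fin (N ^ 2) ⊕ Fin (N ^ 2) → Matrix (Fin N) (Fin N) ℂ)
    (hη : η = Sum.elim (fun i => ((Real.sqrt r : ℂ)) • ξ i)
      (fun i => ((Real.sqrt s : ℂ)) • (Complex.I • ξ i))) :
    (∀ a b, innerRS r s N (η a) (η b) = if a = b then 1 else 0) ∧
      Submodule.span ℝ (Set.range η) = ⊤ := by
  have hN0 : (N : ℂ) ≠ 0 := Nat.cast_ne_zero.mpr (by omega)
  have hNR : (N : ℝ) ≠ 0 := by exact_mod_cast (by omega : N ≠ 0)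
  have h2 : ∀ i j, (ξ i * ξ j).trace = if i = j then -(1 / (N : ℂ)) else 0 := by
    intro i j
    have := horth i j
    split_ifs with h <;> simp only [h, if_true, if_false] at this
    · subst h
      field_simp
      linear_combination -this
    · exact (mul_eq_zero.mp this).resolve_left (by simpa using hN0)
  have h1 : ∀ i j, (ξ i * (ξ j)ᴴ).trace = if i = j then (1 / (N : ℂ)) else 0 := by
    intro i j
    rw [hskew j, Matrix.mul_neg, Matrix.trace_neg, h2]
    split_ifs <;> simp
  constructor
  · intro a b
    rcases a with i | i <;> rcases b with j | j <;>
      simp only [hη, Sum.elim_inl, Sum.elim_inr, innerRS, Matrix.conjTranspose_smul,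
        Matrix.smul_mul, Matrix.mul_smul, Matrix.trace_smul, smul_smul, h1, h2,
        smul_eq_mul, mul_ite, mul_zero, _root_.map_mul, Complex.conj_ofReal, Complex.conj_I,
        Complex.mul_re, Complex.ofReal_re, Complex.ofReal_im, Complex.I_re, Complex.I_im] <;>
      split_ifs with h <;>
      simp_all <;>
      push_cast <;>
      field_simp <;>
      ring_nf <;>
      rw [Real.sq_sqrt (by positivity)] <;> ring
  · rw [Submodule.eq_top_iff']
    intro A
    set S := Submodule.span ℝ (Set.range η)
    have hmemr : ∀ i, ξ i ∈ S := by
      intro i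
      have h : (Real.sqrt r)⁻¹ • ((Real.sqrt r : ℂ) • ξ i) = ξ i := by
        rw [Complex.coe_smul, smul_smul, inv_mul_cancel₀ (by positivity), one_smul]
      rw [← h]
      exact Submodule.smul_mem _ _ (Submodule.subset_span ⟨Sum.inl i, by simp [hη]⟩)
    have hmemi : ∀ i, Complex.I • ξ i ∈ S := by
      intro i
      have h : (Real.sqrt s)⁻¹ • ((Real.sqrt s : ℂ) • (Complex.I • ξ i)) = Complex.I • ξ i := by
        rw [Complex.coe_smul, smul_smul, inv_mul_cancel₀ (by positivity), one_smul]
      rw [← h]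
      exact Submodule.smul_mem _ _ (Submodule.subset_span ⟨Sum.inr i, by simp [hη]⟩)
    have hspanS : Submodule.span ℝ (Set.range ξ) ≤ S := by
      rw [Submodule.span_le]; rintro _ ⟨i, rfl⟩; exact hmemr i
    have hIspan : ∀ B ∈ Submodule.span ℝ (Set.range ξ), Complex.I • B ∈ S := by
      intro B hB
      induction hB using Submodule.span_induction with
      | mem x hx => obtain ⟨i, rfl⟩ := hx; exact hmemi i
      | zero => rw [smul_zero]; exact S.zero_mem
      | add x y _ _ hx hy => rw [smul_add]; exact S.add_mem hx hy
      | smul c x _ hx => rw [smul_comm]; exact S.smul_mem c hx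
    have hX : (2⁻¹ : ℝ) • (A - Aᴴ) ∈ Submodule.span ℝ (Set.range ξ) := by
      apply hspan
      rw [Matrix.conjTranspose_smul, Matrix.conjTranspose_sub, Matrix.conjTranspose_conjTranspose]
      simp [smul_sub]
    have hZ : (2⁻¹ : ℝ) • (Complex.I • (A + Aᴴ)) ∈ Submodule.span ℝ (Set.range ξ) := by
      apply hspan
      rw [Matrix.conjTranspose_smul, Matrix.conjTranspose_smul, Matrix.conjTranspose_add,
        Matrix.conjTranspose_conjTranspose]
      simp [Complex.conj_I, smul_add, add_comm]
    have key : A = (2⁻¹ : ℝ) • (A - Aᴴ) + Complex.I • (-((2⁻¹ : ℝ) • (Complex.I • (A + Aᴴ)))) := by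
      rw [smul_neg, smul_comm Complex.I, smul_smul, Complex.I_mul_I]
      ext p q
      simp [Matrix.smul_apply, Matrix.sub_apply, Matrix.add_apply]
      ring
    rw [key]
    exact S.add_mem (hspanS hX) (hIspan _ (Submodule.neg_mem _ hZ))
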